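/- Let (b_i, c_i)_{i=1}^s be a quadrature rule on [0,1] exact for all polynomials of degree ≤ 2s-1, H a complex inner product space (finite-dimensional), L : H → H ℂ-linear and self-adjoint, and u : ℝ → H a polynomial curve of degree ≤ s. If Re⟨u'(c_i), L u(c_i)⟩ = 0 for i = 1,…,s, then Re⟨L u(1), u(1)⟩ = Re⟨L u(0), u(0)⟩. -/

import Mathlib

open scoped InnerProductSpace
open Polynomial

theorem stmt_8 {H : Type*} [NormedAddCommGroup H] [InnerProductSpace ℂ H]
    [FiniteDimensional ℂ H]
    (s : ℕ) (hs : 1 ≤ s) (b c : Fin s → ℝ)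
    (hquad : ∀ p : Polynomial ℝ, p.natDegree ≤ 2 * s - 1 →
      ∑ i, b i * p.eval (c i) = ∫ x in (0:ℝ)..1, p.eval x)
    (L : H →ₗ[ℂ] H) (hL : ∀ u v : H, ⟪L u, v⟫_ℂ = ⟪u, L v⟫_ℂ)
    (a : Fin (s + 1) → H) (u : ℝ → H)
    (hu : ∀ t : ℝ, u t = ∑ i : Fin (s + 1), (t ^ (i : ℕ)) • a i)
    (hnode : ∀ i, (⟪deriv u (c i), L (u (c i))⟫_ℂ).re = 0) :
    (⟪L (u 1), u 1⟫_ℂ).re = (⟪L (u 0), u 0⟫_ℂ).re := by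
  classical
  set v : ℝ → H := fun t => ∑ i : Fin (s+1), (((i:ℕ):ℝ) * t ^ ((i:ℕ) - 1)) • a i with hv
  have hderiv : ∀ t : ℝ, HasDerivAt u (v t) t := by
    intro t
    have h1 : HasDerivAt (fun t : ℝ => ∑ i : Fin (s+1), (t ^ (i:ℕ)) • a i) (v t) t := by
      apply HasDerivAt.fun_sum
      intro i _
      simpa using (hasDerivAt_pow (i:ℕ) t).smul_const (a i)
    exact h1.congr_of_eventuallyEq (by filter_upwards with x using (hu x))
  set Lc : H →L[ℂ] H := LinearMap.toContinuousLinearMap L with hLc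
  have hLcL : ∀ x : H, Lc x = L x := fun _ => rfl
  -- derivative of the quadratic form
  have hF : ∀ t : ℝ, HasDerivAt (fun t => (⟪L (u t), u t⟫_ℂ).re)
      (2 * (⟪v t, L (u t)⟫_ℂ).re) t := by
    intro t
    have hLu : HasDerivAt (fun t => Lc (u t)) (Lc (v t)) t := by
      simpa [Function.comp_def] using
        ((Lc.restrictScalars ℝ).hasFDerivAt (x := u t)).comp_hasDerivAt t (hderiv t)
    have hinner : HasDerivAt (fun t => ⟪Lc (u t), u t⟫_ℂ)
        (⟪Lc (u t), v t⟫_ℂ + ⟪Lc (v t), u t⟫_ℂ) t := HasDerivAt.inner (𝕜 := ℂ) hLu (hderiv t)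
    have hre := (Complex.reCLM.hasFDerivAt).comp_hasDerivAt t hinner
    have e1 : (⟪L (u t), v t⟫_ℂ).re = (⟪v t, L (u t)⟫_ℂ).re := by
      rw [← inner_conj_symm (L (u t)) (v t), Complex.conj_re]
    have e2 : ⟪L (v t), u t⟫_ℂ = ⟪v t, L (u t)⟫_ℂ := hL _ _
    have h2 : (⟪L (u t), v t⟫_ℂ).re + (⟪L (v t), u t⟫_ℂ).re
        = 2 * (⟪v t, L (u t)⟫_ℂ).re := by rw [e1, e2]; ring
    have hre' : HasDerivAt (fun t => (⟪L (u t), u t⟫_ℂ).re)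
        ((⟪L (u t), v t⟫_ℂ).re + (⟪L (v t), u t⟫_ℂ).re) t := by
      simpa [Function.comp_def, hLcL] using hre
    exact h2 ▸ hre'
  -- polynomial representation
  set P : Polynomial ℝ := ∑ i : Fin (s+1), ∑ j : Fin (s+1),
      Polynomial.C ((⟪L (a i), a j⟫_ℂ).re) * Polynomial.X ^ ((i:ℕ) + (j:ℕ)) with hP
  have hPeval : ∀ t : ℝ, P.eval t = (⟪L (u t), u t⟫_ℂ).re := by
    intro t
    simp only [hP, eval_finset_sum, eval_mul, eval_C, eval_pow, eval_X]
    rw [hu]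
    rw [map_sum, sum_inner, Complex.re_sum]
    refine Finset.sum_congr rfl fun i _ => ?_
    rw [inner_sum, Complex.re_sum]
    refine Finset.sum_congr rfl fun j _ => ?_
    have hsm : ∀ (r : ℝ) (x : H), r • x = (r : ℂ) • x := fun r x =>
      RCLike.real_smul_eq_coe_smul r x
    rw [hsm, hsm, map_smul,
      inner_smul_left, inner_smul_right, Complex.conj_ofReal, ← mul_assoc,
      ← Complex.ofReal_mul, Complex.re_ofReal_mul, pow_add]
    ring
  have hfun : (fun t : ℝ => (⟪L (u t), u t⟫_ℂ).re) = fun t => P.eval t :=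
    funext fun t => (hPeval t).symm
  have hQ : ∀ t : ℝ, P.derivative.eval t = 2 * (⟪v t, L (u t)⟫_ℂ).re := by
    intro t
    have h1 : HasDerivAt (fun t => P.eval t) (2 * (⟪v t, L (u t)⟫_ℂ).re) t := hfun ▸ hF t
    exact (P.hasDerivAt t).unique h1
  -- degree bound
  have hdegP : P.natDegree ≤ 2 * s := by
    refine natDegree_sum_le_of_forall_le _ _ fun i _ => ?_
    refine natDegree_sum_le_of_forall_le _ _ fun j _ => ?_
    refine (natDegree_C_mul_X_pow_le _ _).trans ?_
    have hi : (i:ℕ) ≤ s := Fin.is_le i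
    have hj : (j:ℕ) ≤ s := Fin.is_le j
    omega
  have hdeg : P.derivative.natDegree ≤ 2 * s - 1 :=
    (natDegree_derivative_le P).trans (Nat.sub_le_sub_right hdegP 1)
  have hq := hquad P.derivative hdeg
  have hL0 : ∑ i, b i * P.derivative.eval (c i) = 0 := by
    refine Finset.sum_eq_zero fun i _ => ?_
    have hd : deriv u (c i) = v (c i) := (hderiv (c i)).deriv
    rw [hQ, ← hd, hnode i]
    ring
  have hint : (∫ x in (0:ℝ)..1, P.derivative.eval x) = P.eval 1 - P.eval 0 := by
    refine intervalIntegral.integral_eq_sub_of_hasDerivAt (fun x _ => P.hasDerivAt x) ?_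
    exact (Polynomial.continuous _).intervalIntegrable _ _
  rw [hL0, hint] at hq
  have := hPeval 1
  have := hPeval 0
  linarith
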